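/- Suppose a monomial ideal I ⊂ S has minimal generating set G(I) = {x_1^{a_1},...,x_q^{a_q}, v_{01},...,v_{0r_0}, v_{11}x_{q+1}^{a_{11}},..., v_{n-q,r_{n-q}}x_n^{a_{n-q,r_{n-q}}}} where a_j > 0, v_{0j} ∈ K[x_1,...,x_q], v_{ij} ∈ K[x_1,...,x_{q+i-1}], a_{ij} > 0, and for every 2 ≤ i ≤ n−q and 1 ≤ j ≤ r_i there exists 1 ≤ k ≤ r_{i-1} with v_{i-1,k} | v_{ij}. Then I is an ideal of Borel type. -/

import Mathlib

/-! Monomials in `S = K[x_1,…,x_n]` are identified with their exponent vectors in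
`Fin n →₀ ℕ` (0-indexed: the variable `x_j` of the paper is index `j-1`).
A monomial ideal is identified with its set `M` of exponent vectors of monomials. -/

/-- `M` is the set of exponent vectors of the monomials of a monomial ideal:
it is closed under multiplication by arbitrary monomials. -/
def MonIdeal {n : ℕ} (M : Set (Fin n →₀ ℕ)) : Prop :=
  ∀ u ∈ M, ∀ v : Fin n →₀ ℕ, u + v ∈ M

/-- The Borel type condition: for every monomial `u ∈ I` and `j < i` with `x_i ∣ u`
there is `t > 0` with `x_j^t · u / x_i^{ν_i(u)} ∈ I`. -/
def BorelProp {n : ℕ} (M : Set (Fin n →₀ ℕ)) : Prop :=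
  ∀ u ∈ M, ∀ i j : Fin n, j < i → u i ≠ 0 →
    ∃ t : ℕ, 0 < t ∧ Finsupp.single j t + Finsupp.update u i 0 ∈ M

/-- `i = m(u)`, the largest index of a variable dividing the monomial `u`. -/
def IsMaxVar {n : ℕ} (u : Fin n →₀ ℕ) (i : Fin n) : Prop :=
  u i ≠ 0 ∧ ∀ k : Fin n, i < k → u k = 0

/-- `M` is stable: for every monomial `u ∈ M` and `j < m(u)`, `x_j · u / x_{m(u)} ∈ M`. -/
def StableProp {n : ℕ} (M : Set (Fin n →₀ ℕ)) : Prop :=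
  ∀ u ∈ M, ∀ i : Fin n, IsMaxVar u i → ∀ j : Fin n, j < i →
    Finsupp.single j 1 + Finsupp.update u i (u i - 1) ∈ M

/-- degree of a monomial. -/
def mdeg {n : ℕ} (u : Fin n →₀ ℕ) : ℕ := ∑ k : Fin n, u k

/-- `u` is a minimal monomial generator of `M` (divisibility of monomials is `≤`
of exponent vectors). -/
def MinGen {n : ℕ} (M : Set (Fin n →₀ ℕ)) (u : Fin n →₀ ℕ) : Prop :=
  u ∈ M ∧ ∀ v ∈ M, v ≤ u → v = u

/-- `deg(I)`: the maximal degree of a minimal monomial generator. -/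
noncomputable def idealDeg {n : ℕ} (M : Set (Fin n →₀ ℕ)) : ℕ :=
  sSup {d | ∃ u, MinGen M u ∧ mdeg u = d}

/-- `I_{≥ e}`: the ideal generated by all monomials of `I` of degree `≥ e`. -/
def geSet {n : ℕ} (M : Set (Fin n →₀ ℕ)) (e : ℕ) : Set (Fin n →₀ ℕ) :=
  {w | ∃ u ∈ M, e ≤ mdeg u ∧ u ≤ w}

/-- the product of two monomial ideals (on the level of monomials). -/
def prodSet {n : ℕ} (M N : Set (Fin n →₀ ℕ)) : Set (Fin n →₀ ℕ) :=
  {w | ∃ u ∈ M, ∃ v ∈ N, w = u + v}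

/-- The Castelnuovo–Mumford regularity of a monomial ideal of Borel type: by
[Cimpoeas, Cor. 8] / Theorem 1.5, `reg(I) = min { e ≥ deg I : I_{≥e} is stable }`. -/
noncomputable def regSet {n : ℕ} (M : Set (Fin n →₀ ℕ)) : ℕ :=
  sInf {e | idealDeg M ≤ e ∧ StableProp (geSet M e)}

/-- `q` (0-indexed) is the largest index with `x_q ∈ √I`. -/
def IsQ {n : ℕ} (M : Set (Fin n →₀ ℕ)) (q : Fin n) : Prop :=
  (∃ k : ℕ, 0 < k ∧ Finsupp.single q k ∈ M) ∧
    ∀ j : Fin n, (∃ k : ℕ, 0 < k ∧ Finsupp.single j k ∈ M) → j ≤ q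

/-- a monomial ideal generated by
`x_1^{a_1},…,x_q^{a_q}`, monomials `v_{0j} ∈ K[x_1,…,x_q]`, and monomials
`v_{ij} x_{q+i}^{a_{ij}}` with `v_{ij} ∈ K[x_1,…,x_{q+i-1}]` (`1 ≤ i ≤ n-q`),
such that each `v_{ij}` (`i ≥ 2`) is divisible by some `v_{i-1,k}`, is of Borel type.
(0-indexed: the variable `x_s` of the paper is index `s - 1`.) -/
theorem statement15 {n : ℕ} (M : Set (Fin n →₀ ℕ))
    (q : ℕ) (hq1 : 1 ≤ q) (hqn : q ≤ n)
    (a : ℕ → ℕ) (ha : ∀ j < q, 0 < a j)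
    (r : ℕ → ℕ) (v : ℕ → ℕ → (Fin n →₀ ℕ)) (b : ℕ → ℕ → ℕ)
    (hv0 : ∀ j < r 0, ∀ k : Fin n, (v 0 j) k ≠ 0 → (k : ℕ) < q)
    (hvi : ∀ i, 1 ≤ i → i ≤ n - q → ∀ j < r i,
      ∀ k : Fin n, (v i j) k ≠ 0 → (k : ℕ) < q + i - 1)
    (hb : ∀ i, 1 ≤ i → i ≤ n - q → ∀ j < r i, 0 < b i j)
    (hchain : ∀ i, 2 ≤ i → i ≤ n - q → ∀ j < r i,
      ∃ k < r (i - 1), v (i - 1) k ≤ v i j)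
    (hMdef : M = {w : Fin n →₀ ℕ |
      (∃ j : Fin n, (j : ℕ) < q ∧ Finsupp.single j (a (j : ℕ)) ≤ w) ∨
      (∃ j < r 0, v 0 j ≤ w) ∨
      (∃ i, 1 ≤ i ∧ i ≤ n - q ∧ ∃ j < r i, ∃ hqi : q + i - 1 < n,
        v i j + Finsupp.single ⟨q + i - 1, hqi⟩ (b i j) ≤ w)}) :
    BorelProp M := by
  -- chain descent: every `v i₀ j₀` is divisible by some `v i' j'` for `1 ≤ i' < i₀`
  have descent : ∀ i₀, i₀ ≤ n - q → ∀ i', 1 ≤ i' → i' < i₀ → ∀ j₀ < r i₀,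
      ∃ j' < r i', v i' j' ≤ v i₀ j₀ := by
    intro i₀
    induction i₀ with
    | zero => intro _ i' _ h; omega
    | succ m ih =>
      intro h1 i' hi'1 hi'lt j₀ hj₀
      obtain ⟨k, hk, hle⟩ := hchain (m + 1) (by omega) h1 j₀ hj₀
      have hm1 : m + 1 - 1 = m := by omega
      rw [hm1] at hk hle
      by_cases h : i' = m
      · subst h; exact ⟨k, hk, hle⟩
      · obtain ⟨j', hj', hle'⟩ := ih (by omega) i' hi'1 (by omega) k hk
        exact ⟨j', hj', hle'.trans hle⟩
  subst hMdef
  intro u hu i j hji hui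
  have hji' : (j : ℕ) < (i : ℕ) := hji
  have hwk : ∀ k : Fin n, (Finsupp.update u i 0) k = if k = i then 0 else u k := by
    intro k
    simp [Finsupp.coe_update, Function.update_apply]
  by_cases hjq : (j : ℕ) < q
  · exact ⟨a j, ha _ hjq, Or.inl ⟨j, hjq, le_self_add⟩⟩
  · push_neg at hjq
    rcases hu with ⟨j₀, hj₀q, hle⟩ | ⟨j₀, hj₀, hle⟩ | ⟨i₀, hi₀1, hi₀n, j₀, hj₀, hqi, hle⟩
    · -- generator `x_{j₀}^{a_{j₀}}` with `j₀ < q ≤ j < i`, so it divides the result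
      refine ⟨1, one_pos, Or.inl ⟨j₀, hj₀q, ?_⟩⟩
      rw [Finsupp.le_def] at hle ⊢
      intro k
      have h1 := hle k
      rw [Finsupp.add_apply, hwk]
      by_cases hki : k = i
      · have hval : (k : ℕ) = (i : ℕ) := congrArg Fin.val hki
        have hvals : (j₀ : ℕ) ≠ (k : ℕ) := by omega
        rw [Finsupp.single_eq_of_ne (fun h => hvals (congrArg Fin.val h.symm))]
        omega
      · rw [if_neg hki]
        omega
    · -- generator `v 0 j₀` supported below `q ≤ i`
      refine ⟨1, one_pos, Or.inr (Or.inl ⟨j₀, hj₀, ?_⟩)⟩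
      rw [Finsupp.le_def] at hle ⊢
      intro k
      have h1 := hle k
      rw [Finsupp.add_apply, hwk]
      split_ifs with h2
      · subst h2
        have : (v 0 j₀) k = 0 := by
          by_contra h
          exact absurd (hv0 j₀ hj₀ k h) (by omega)
        omega
      · omega
    · -- generator `v i₀ j₀ · x_{q+i₀-1}^{b i₀ j₀}`
      by_cases hgi : (v i₀ j₀) i = 0 ∧ i ≠ (⟨q + i₀ - 1, hqi⟩ : Fin n)
      · -- the generator does not involve `x_i`, so it divides the result
        refine ⟨1, one_pos, Or.inr (Or.inr ⟨i₀, hi₀1, hi₀n, j₀, hj₀, hqi, ?_⟩)⟩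
        rw [Finsupp.le_def] at hle ⊢
        intro k
        have h1 := hle k
        rw [Finsupp.add_apply] at h1
        rw [Finsupp.add_apply, Finsupp.add_apply, hwk]
        by_cases hki : k = i
        · have h3 : (v i₀ j₀) k = 0 := hki ▸ hgi.1
          have h4 : (fun₀ | (⟨q + i₀ - 1, hqi⟩ : Fin n) => b i₀ j₀) k = 0 :=
            Finsupp.single_eq_of_ne (by rw [hki]; exact hgi.2)
          rw [h3, h4, if_pos hki]
          omega
        · rw [if_neg hki]
          omega
      · -- the generator involves `x_i`; descend the chain to level `i' = j - q + 1`
        have hipv : (i : ℕ) ≤ q + i₀ - 1 := by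
          by_cases hv' : (v i₀ j₀) i = 0
          · have h5 : i = (⟨q + i₀ - 1, hqi⟩ : Fin n) := by tauto
            rw [h5]
          · exact le_of_lt (hvi i₀ hi₀1 hi₀n j₀ hj₀ i hv')
        have hi₀2 : 2 ≤ i₀ := by omega
        set i' : ℕ := (j : ℕ) - q + 1 with hi'
        have hi'1 : 1 ≤ i' := by omega
        have hi'lt : i' < i₀ := by omega
        obtain ⟨j', hj', hvle⟩ := descent i₀ hi₀n i' hi'1 hi'lt j₀ hj₀
        have hqj : q + i' - 1 = (j : ℕ) := by omega
        have hqi' : q + i' - 1 < n := by rw [hqj]; exact j.2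
        have hpj : (⟨q + i' - 1, hqi'⟩ : Fin n) = j := by
          apply Fin.ext; exact hqj
        have hsupp : ∀ k : Fin n, (v i' j') k ≠ 0 → (k : ℕ) < (j : ℕ) := by
          intro k hk
          have := hvi i' hi'1 (by omega) j' hj' k hk
          omega
        refine ⟨b i' j', hb i' hi'1 (by omega) j' hj',
          Or.inr (Or.inr ⟨i', hi'1, by omega, j', hj', hqi', ?_⟩)⟩
        rw [hpj, Finsupp.le_def] at *
        intro k
        have h1 := hle k
        have h2 := hvle k
        rw [Finsupp.add_apply] at h1
        rw [Finsupp.add_apply, Finsupp.add_apply, hwk]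
        by_cases hki : k = i
        · have h3 : (v i' j') k = 0 := by
            by_contra h
            have h4 := hsupp k h
            have h5 : (k : ℕ) = (i : ℕ) := congrArg Fin.val hki
            omega
          rw [h3, if_pos hki]
          omega
        · rw [if_neg hki]
          omega
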